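/- arXiv:math/0411187 — 4 statements merged into one kernel-verified Lean document; each statement's English description precedes it below -/
import Mathlib

section
/- Let U be a free R-module of rank n, and let d be the Koszul differential on Λ_* = Λ_*^R(U) associated to elements r_1,...,r_n ∈ R. Let Δ: Λ_* → Λ_* ⊗_R Λ_* be the coproduct of the exterior bialgebra, determined by Δ(m) = 1⊗m + m⊗1 for m of degree 1. Then Δ ∘ d = (d ⊗ 1) ∘ Δ. -/
universe u

open ExteriorAlgebra

/-!
We realize the (graded-cocommutative) coproduct `Δ : Λ_*(U) → Λ_*(U) ⊗ Λ_*(U)` of the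
exterior bialgebra through the canonical algebra isomorphism
`Λ_*(U) ⊗ Λ_*(U) ≅ Λ_*(U ⊕ U)` (of *graded* algebras): `Δ` is the unique algebra map
`Λ_*(U) → Λ_*(U ⊕ U)` with `Δ(m) = (m, 0) + (0, m) (= m ⊗ 1 + 1 ⊗ m)` for `m ∈ U` of
degree one.  Under this identification, `d ⊗ 1` is the unique graded derivation of
`Λ_*(U ⊕ U)` sending `ι (m, m') ↦ ∑ⱼ mⱼ rⱼ`, and the tensor-product differential
`d^⊗ = d ⊗ 1 + τ ∘ (d ⊗ 1) ∘ τ` is the one sending `ι (m, m') ↦ ∑ⱼ mⱼ rⱼ + ∑ⱼ m'ⱼ rⱼ`.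
Derivations and the Koszul differential `d` are specified exactly as in the file for
STATEMENT 1.
-/

/-!
STATEMENT 2: `Δ ∘ d = (d ⊗ 1) ∘ Δ`.
-/
set_option maxHeartbeats 1600000 in
theorem coproduct_commutes_with_koszul_differential
    (R : Type u) [CommRing R] (n : ℕ) (r : Fin n → R)
    (d : ExteriorAlgebra R (Fin n → R) →ₗ[R] ExteriorAlgebra R (Fin n → R))
    (hgen : ∀ m : Fin n → R,
      d (ι R m) = algebraMap R (ExteriorAlgebra R (Fin n → R)) (∑ j, m j * r j))
    (hder : ∀ (i : ℕ) (x y : ExteriorAlgebra R (Fin n → R)),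
      x ∈ (LinearMap.range (ι R : (Fin n → R) →ₗ[R] ExteriorAlgebra R (Fin n → R)) ^ i :
        Submodule R (ExteriorAlgebra R (Fin n → R))) →
      d (x * y) = d x * y + ((-1 : R) ^ i) • (x * d y))
    (Delta : ExteriorAlgebra R (Fin n → R) →ₐ[R]
      ExteriorAlgebra R ((Fin n → R) × (Fin n → R)))
    (hDelta : ∀ m : Fin n → R, Delta (ι R m) = ι R ((m, 0) : (Fin n → R) × (Fin n → R)) +
      ι R ((0, m) : (Fin n → R) × (Fin n → R)))
    (dOne : ExteriorAlgebra R ((Fin n → R) × (Fin n → R)) →ₗ[R]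
      ExteriorAlgebra R ((Fin n → R) × (Fin n → R)))
    -- `d ⊗ 1` contracts only the first tensor factor: `ι (m, m') ↦ ∑ⱼ mⱼ rⱼ`
    (hgen1 : ∀ m : (Fin n → R) × (Fin n → R),
      dOne (ι R m) = algebraMap R _ (∑ j, m.1 j * r j))
    (hder1 : ∀ (i : ℕ) (x y : ExteriorAlgebra R ((Fin n → R) × (Fin n → R))),
      x ∈ (LinearMap.range (ι R : ((Fin n → R) × (Fin n → R)) →ₗ[R]
          ExteriorAlgebra R ((Fin n → R) × (Fin n → R))) ^ i :
        Submodule R (ExteriorAlgebra R ((Fin n → R) × (Fin n → R)))) →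
      dOne (x * y) = dOne x * y + ((-1 : R) ^ i) • (x * dOne y))
    :
    Delta.toLinearMap ∘ₗ d = dOne ∘ₗ Delta.toLinearMap := by
  classical
  -- `d 1 = 0` and similarly for `dOne`
  have hone : (1 : ExteriorAlgebra R (Fin n → R)) ∈
      (LinearMap.range (ι R : (Fin n → R) →ₗ[R] ExteriorAlgebra R (Fin n → R)) ^ 0 :
        Submodule R (ExteriorAlgebra R (Fin n → R))) := by
    rw [pow_zero, Submodule.mem_one]; exact ⟨1, map_one _⟩
  have hone' : (1 : ExteriorAlgebra R ((Fin n → R) × (Fin n → R))) ∈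
      (LinearMap.range (ι R : ((Fin n → R) × (Fin n → R)) →ₗ[R]
          ExteriorAlgebra R ((Fin n → R) × (Fin n → R))) ^ 0 :
        Submodule R (ExteriorAlgebra R ((Fin n → R) × (Fin n → R)))) := by
    rw [pow_zero, Submodule.mem_one]; exact ⟨1, map_one _⟩
  have hd1 : d 1 = 0 := by
    have h := hder 0 1 1 hone
    simp only [one_mul, mul_one, pow_zero, one_smul] at h
    exact (left_eq_add.mp h)
  have hd1' : dOne 1 = 0 := by
    have h := hder1 0 1 1 hone'
    simp only [one_mul, mul_one, pow_zero, one_smul] at h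
    exact (left_eq_add.mp h)
  have hdalg : ∀ c : R, d (algebraMap R _ c) = 0 := fun c => by
    rw [Algebra.algebraMap_eq_smul_one, map_smul, hd1, smul_zero]
  have hdalg' : ∀ c : R, dOne (algebraMap R _ c) = 0 := fun c => by
    rw [Algebra.algebraMap_eq_smul_one, map_smul, hd1', smul_zero]
  refine LinearMap.ext fun x => ?_
  show Delta (d x) = dOne (Delta x)
  have hx : x ∈ ⨆ i : ℕ,
      (LinearMap.range (ι R : (Fin n → R) →ₗ[R] ExteriorAlgebra R (Fin n → R)) ^ i :
        Submodule R (ExteriorAlgebra R (Fin n → R))) := by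
    rw [CliffordAlgebra.iSup_ι_range_eq_top]; exact Submodule.mem_top
  refine Submodule.iSup_induction _ (motive := fun x => Delta (d x) = dOne (Delta x)) hx
    (fun i x hxi => ?_) (by simp only [map_zero]) (fun a b ha hb => by simp [map_add, ha, hb])
  -- main induction on elements of `(range ι) ^ i`
  have key : ∀ (i : ℕ) (x : ExteriorAlgebra R (Fin n → R))
      (hxi : x ∈ (LinearMap.range (ι R : (Fin n → R) →ₗ[R]
          ExteriorAlgebra R (Fin n → R)) ^ i :
        Submodule R (ExteriorAlgebra R (Fin n → R)))),
      Delta (d x) = dOne (Delta x) ∧ Delta x ∈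
        (LinearMap.range (ι R : ((Fin n → R) × (Fin n → R)) →ₗ[R]
            ExteriorAlgebra R ((Fin n → R) × (Fin n → R))) ^ i :
          Submodule R (ExteriorAlgebra R ((Fin n → R) × (Fin n → R)))) := by
    intro i x hxi
    induction hxi using Submodule.pow_induction_on_left' with
    | algebraMap c =>
      refine ⟨?_, by rw [pow_zero, Submodule.mem_one]; exact ⟨c, (Delta.commutes c).symm⟩⟩
      rw [hdalg, map_zero, AlgHom.commutes, hdalg']
    | add x y i hx hy ihx ihy =>
      exact ⟨by simp only [map_add, ihx.1, ihy.1], by simp [Submodule.add_mem _ ihx.2 ihy.2]⟩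
    | mem_mul m hm i x hxmem ih =>
      obtain ⟨v, rfl⟩ := hm
      have hv1 : (ι R v : ExteriorAlgebra R (Fin n → R)) ∈
          (LinearMap.range (ι R : (Fin n → R) →ₗ[R] ExteriorAlgebra R (Fin n → R)) ^ 1 :
            Submodule R (ExteriorAlgebra R (Fin n → R))) := by
        rw [pow_one]; exact ⟨v, rfl⟩
      have hv1' : Delta (ι R v) ∈
          (LinearMap.range (ι R : ((Fin n → R) × (Fin n → R)) →ₗ[R]
              ExteriorAlgebra R ((Fin n → R) × (Fin n → R))) ^ 1 :
            Submodule R (ExteriorAlgebra R ((Fin n → R) × (Fin n → R)))) := by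
        rw [pow_one, hDelta]
        exact Submodule.add_mem _ ⟨_, rfl⟩ ⟨_, rfl⟩
      have hv2' : Delta (ι R v) ∈
          LinearMap.range (ι R : ((Fin n → R) × (Fin n → R)) →ₗ[R]
              ExteriorAlgebra R ((Fin n → R) × (Fin n → R))) := by
        rw [hDelta]
        exact Submodule.add_mem _ ⟨_, rfl⟩ ⟨_, rfl⟩
      constructor
      · rw [hder 1 _ x hv1, map_add, map_smul, map_mul, map_mul, ih.1,
          hgen, AlgHom.commutes, map_mul, hder1 1 _ _ hv1', hDelta, map_add,
          hgen1, hgen1]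
        simp [hDelta]
      · rw [map_mul, pow_succ']
        exact Submodule.mul_mem_mul hv2' ih.2
  exact (key i x hxi).1
end

section
/- Let (r_1,...,r_n) be a regular sequence in a commutative ring R generating the ideal I. Then Tor_*^R(R/I, R/I) is isomorphic as a graded R/I-algebra to the exterior algebra over R/I on a free module of rank n concentrated in degree 1, i.e. Tor_*^R(R/I, R/I) ≅ R/I ⊗_R Λ_*^R(U) where U is free of rank n. -/
/-- Index type for the standard basis of the degree-`p` part of the exterior algebra
on a free module with basis `Fin n`: subsets of `Fin n` of cardinality `p`. -/
abbrev ExtIdx (n p : ℕ) := {s : Finset (Fin n) // s.card = p}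

universe u

open CategoryTheory

section AuxCombinatorics

lemma extIdx_card (n p : ℕ) : Fintype.card (ExtIdx n p) = n.choose p := by
  simp [Fintype.card_finset_len (α := Fin n) p]

instance uniqueExtIdx0 (n : ℕ) : Unique (ExtIdx n 0) where
  default := ⟨∅, rfl⟩
  uniq s := Subtype.ext (Finset.card_eq_zero.mp s.2)

instance (p : ℕ) : IsEmpty (ExtIdx 0 (p + 1)) :=
  ⟨fun s => by
    have h := s.2
    rw [Finset.eq_empty_of_isEmpty s.1] at h
    simp at h⟩

/-- Pascal's rule as an equivalence of basis index types. -/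
noncomputable def extIdxSuccEquiv (n p : ℕ) :
    (ExtIdx n (p + 1) ⊕ ExtIdx n p) ≃ ExtIdx (n + 1) (p + 1) := by
  apply Fintype.equivOfCardEq
  rw [Fintype.card_sum, extIdx_card, extIdx_card, extIdx_card,
    Nat.choose_succ_succ (n := n) (k := p), add_comm]

end AuxCombinatorics

section Koszul

variable {R : Type u} [CommRing R]

/-- Membership in `I • ⊤` is preserved by linear maps. -/
lemma mem_smul_top_map {I : Ideal R} {M N : Type u} [AddCommGroup M] [Module R M]
    [AddCommGroup N] [Module R N] (f : M →ₗ[R] N) {z : M}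
    (hz : z ∈ I • (⊤ : Submodule R M)) : f z ∈ I • (⊤ : Submodule R N) :=
  Submodule.smul_top_le_comap_smul_top I f hz

/-- The data of a Koszul-type free resolution of `R ⧸ I`: a complex of free modules
(of the correct ranks) whose differentials have image inside `I • ⊤`, together with
the exactness properties making its augmentation to `R ⧸ I` a resolution. -/
structure KoszulData (R : Type u) [CommRing R] (n : ℕ) (I : Ideal R) where
  M : ℕ → ModuleCat.{u} R
  d : ∀ p, (M (p + 1) : Type u) →ₗ[R] (M p : Type u)
  dd : ∀ p (z : M (p + 2)), d p (d (p + 1) z) = 0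
  equiv : ∀ p, (M p : Type u) ≃ₗ[R] (ExtIdx n p →₀ R)
  e0 : (M 0 : Type u) ≃ₗ[R] R
  hdI : ∀ p (z : M (p + 1)), d p z ∈ I • (⊤ : Submodule R (M p))
  exact1 : ∀ p (z : M (p + 1)), d p z = 0 → ∃ w, d (p + 1) w = z
  exact0 : ∀ z : (M 0 : Type u), (∃ w, d 0 w = z) ↔ e0 z ∈ I

/-- The base case: the Koszul resolution of `R` itself (empty sequence). -/
noncomputable def koszulZero (R : Type u) [CommRing R] : KoszulData R 0 ⊥ where
  M p := ModuleCat.of R (ExtIdx 0 p →₀ R)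
  d _ := 0
  dd _ _ := rfl
  equiv _ := LinearEquiv.refl _ _
  e0 := Finsupp.LinearEquiv.finsuppUnique R R (ExtIdx 0 0)
  hdI _ _ := by simp
  exact1 p z _ := ⟨0, by
    have hz : z = (0 : ExtIdx 0 (p + 1) →₀ R) := Finsupp.ext fun s => (IsEmpty.false s).elim
    exact hz.symm⟩
  exact0 z := by
    constructor
    · rintro ⟨w, rfl⟩
      simp
    · intro hz
      refine ⟨0, ?_⟩
      rw [Submodule.mem_bot] at hz
      have h0 : z = 0 :=
        (map_eq_zero_iff _ (Finsupp.LinearEquiv.finsuppUnique R R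
          (ExtIdx 0 0)).injective).mp hz
      exact h0.symm

/-- The inductive step: the mapping cone of multiplication by `x` on a Koszul-type
resolution, for `x` regular modulo `I`. -/
noncomputable def KoszulData.step {n : ℕ} {I : Ideal R} (K : KoszulData R n I) (x : R)
    (hx : ∀ b : R, x * b ∈ I → b ∈ I) :
    KoszulData R (n + 1) (I ⊔ Ideal.span {x}) where
  M p := match p with
    | 0 => K.M 0
    | (p + 1) => ModuleCat.of R ((K.M (p + 1) : Type u) × (K.M p : Type u))
  d p := match p with
    | 0 => (K.d 0).comp (LinearMap.fst R _ _) + x • (LinearMap.snd R _ _)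
    | (p + 1) => LinearMap.prod
        ((K.d (p + 1)).comp (LinearMap.fst R _ _) + x • (LinearMap.snd R _ _))
        (-(K.d p).comp (LinearMap.snd R _ _))
  dd p z := by
    match p with
    | 0 =>
      show K.d 0 (K.d 1 z.1 + x • z.2) + x • (-(K.d 0 z.2)) = 0
      rw [map_add, map_smul, K.dd]
      simp
    | (p + 1) =>
      show (K.d (p + 1) (K.d (p + 2) z.1 + x • z.2) + x • (-(K.d (p + 1) z.2)),
        -(K.d p (-(K.d (p + 1) z.2)))) = 0
      have h1 : K.d (p + 1) (K.d (p + 2) z.1 + x • z.2) + x • (-(K.d (p + 1) z.2)) = 0 := by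
        rw [map_add, map_smul, K.dd]
        simp
      have h2 : -(K.d p (-(K.d (p + 1) z.2))) = 0 := by
        rw [map_neg, K.dd]
        simp
      rw [h1, h2]
      rfl
  equiv p := match p with
    | 0 => K.equiv 0 ≪≫ₗ Finsupp.domLCongr (Equiv.ofUnique (ExtIdx n 0) (ExtIdx (n + 1) 0))
    | (p + 1) =>
      (LinearEquiv.prodCongr (K.equiv (p + 1)) (K.equiv p)) ≪≫ₗ
        (Finsupp.sumFinsuppLEquivProdFinsupp R).symm ≪≫ₗ
        Finsupp.domLCongr (extIdxSuccEquiv n p)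
  e0 := K.e0
  hdI p z := by
    have hxmem : x ∈ I ⊔ Ideal.span {x} :=
      Submodule.mem_sup_right (Ideal.mem_span_singleton_self x)
    have hmono : ∀ {N : ModuleCat.{u} R} {w : (N : Type u)},
        w ∈ I • (⊤ : Submodule R N) → w ∈ (I ⊔ Ideal.span {x}) • (⊤ : Submodule R N) :=
      fun hw => Submodule.smul_mono_left le_sup_left hw
    match p with
    | 0 =>
      show K.d 0 z.1 + x • z.2 ∈ _
      exact add_mem (hmono (K.hdI 0 z.1)) (Submodule.smul_mem_smul hxmem trivial)
    | (p + 1) =>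
      show (K.d (p + 1) z.1 + x • z.2, -(K.d p z.2)) ∈ _
      have h1 : K.d (p + 1) z.1 + x • z.2 ∈ (I ⊔ Ideal.span {x}) •
          (⊤ : Submodule R (K.M (p + 1))) :=
        add_mem (hmono (K.hdI (p + 1) z.1)) (Submodule.smul_mem_smul hxmem trivial)
      have h2 : -(K.d p z.2) ∈ (I ⊔ Ideal.span {x}) • (⊤ : Submodule R (K.M p)) :=
        neg_mem (hmono (K.hdI p z.2))
      have e1 := mem_smul_top_map (I := I ⊔ Ideal.span {x})
        (LinearMap.inl R (K.M (p + 1) : Type u) (K.M p : Type u)) h1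
      have e2 := mem_smul_top_map (I := I ⊔ Ideal.span {x})
        (LinearMap.inr R (K.M (p + 1) : Type u) (K.M p : Type u)) h2
      have : ((K.d (p + 1) z.1 + x • z.2 : (K.M (p + 1) : Type u)), -(K.d p z.2)) =
          (LinearMap.inl R (K.M (p + 1) : Type u) (K.M p : Type u))
            (K.d (p + 1) z.1 + x • z.2) +
          (LinearMap.inr R (K.M (p + 1) : Type u) (K.M p : Type u)) (-(K.d p z.2)) := by
        simp
      rw [this]
      exact add_mem e1 e2
  exact1 p z hz := by
    match p with
    | 0 =>
      -- z : M 1 × M 0, hypothesis : K.d 0 z.1 + x • z.2 = 0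
      replace hz : K.d 0 z.1 + x • z.2 = 0 := hz
      have h1 : K.d 0 z.1 = -(x • z.2) := eq_neg_of_add_eq_zero_left hz
      have h2 : K.e0 (x • z.2) ∈ I := by
        have := (K.exact0 (-(x • z.2))).mp ⟨z.1, h1⟩
        rwa [map_neg, neg_mem_iff] at this
      have h3 : x * K.e0 z.2 ∈ I := by
        rwa [map_smul, smul_eq_mul] at h2
      obtain ⟨c, hc⟩ := (K.exact0 z.2).mpr (hx _ h3)
      have h5 : K.d 0 (z.1 + x • c) = 0 := by
        rw [map_add, map_smul, hc, h1]
        simp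
      obtain ⟨w1, hw1⟩ := K.exact1 0 _ h5
      refine ⟨(w1, -c), ?_⟩
      show (K.d 1 w1 + x • (-c), -(K.d 0 (-c))) = z
      have : K.d 1 w1 + x • (-c) = z.1 := by
        rw [hw1]
        simp
      rw [this, map_neg, hc, neg_neg]
    | (p + 1) =>
      -- z : M (p+2) × M (p+1)
      replace hz : (K.d (p + 1) z.1 + x • z.2, -(K.d p z.2)) = 0 := hz
      have hz1 : K.d (p + 1) z.1 + x • z.2 = 0 := congrArg Prod.fst hz
      have hz2 : K.d p z.2 = 0 := by
        have := congrArg Prod.snd hz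
        simpa [neg_eq_zero] using this
      obtain ⟨c, hc⟩ := K.exact1 p z.2 hz2
      have h5 : K.d (p + 1) (z.1 + x • c) = 0 := by
        rw [map_add, map_smul, hc, eq_neg_of_add_eq_zero_left hz1]
        simp
      obtain ⟨w1, hw1⟩ := K.exact1 (p + 1) _ h5
      refine ⟨(w1, -c), ?_⟩
      show (K.d (p + 2) w1 + x • (-c), -(K.d (p + 1) (-c))) = z
      have h6 : K.d (p + 2) w1 + x • (-c) = z.1 := by
        rw [hw1]
        simp
      rw [h6, map_neg, hc, neg_neg]
  exact0 z := by
    constructor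
    · rintro ⟨w, rfl⟩
      show K.e0 (K.d 0 w.1 + x • w.2) ∈ _
      rw [map_add, map_smul, smul_eq_mul]
      refine add_mem (Submodule.mem_sup_left ?_) (Submodule.mem_sup_right ?_)
      · exact (K.exact0 (K.d 0 w.1)).mp ⟨w.1, rfl⟩
      · exact Ideal.mem_span_singleton.mpr ⟨K.e0 w.2, rfl⟩
    · intro hz
      obtain ⟨u, hu, v, hv, huv⟩ := Submodule.mem_sup.mp hz
      obtain ⟨c, hc⟩ := Ideal.mem_span_singleton'.mp hv
      set w2 : (K.M 0 : Type u) := K.e0.symm c with hw2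
      have h7 : K.e0 (z - x • w2) ∈ I := by
        rw [map_sub, map_smul, hw2, LinearEquiv.apply_symm_apply, ← huv, smul_eq_mul,
          mul_comm, hc]
        simpa using hu
      obtain ⟨w1, hw1⟩ := (K.exact0 (z - x • w2)).mpr h7
      refine ⟨(w1, w2), ?_⟩
      show K.d 0 w1 + x • w2 = z
      rw [hw1]
      simp

/-- If `rs` is weakly regular on `R` then a Koszul-type resolution
of `R ⧸ span(range r)` exists. -/
theorem koszulData_exists (n : ℕ) (r : Fin n → R)
    (h : RingTheory.Sequence.IsWeaklyRegular R (List.ofFn r)) :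
    Nonempty (KoszulData R n (Ideal.span (Set.range r))) := by
  induction n with
  | zero =>
    have : Ideal.span (Set.range r) = ⊥ := by
      rw [Set.range_eq_empty, Ideal.span_empty]
    exact ⟨this ▸ koszulZero R⟩
  | succ n ih =>
    set r' : Fin n → R := fun i => r i.castSucc with hr'
    set x : R := r (Fin.last n) with hxdef
    have hsplit : List.ofFn r = List.ofFn r' ++ [x] := by
      rw [List.ofFn_succ']
      simp [List.concat_eq_append, hr', hxdef]
    rw [hsplit, RingTheory.Sequence.isWeaklyRegular_append_iff] at h
    obtain ⟨h1, h2⟩ := h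
    -- identify the ideals
    have hofList : Ideal.ofList (List.ofFn r') = Ideal.span (Set.range r') := by
      refine congrArg Ideal.span ?_
      ext a
      exact List.mem_ofFn
    obtain ⟨K⟩ := ih r' h1
    -- regularity of x mod I'
    have hreg : IsSMulRegular
        (R ⧸ (Ideal.ofList (List.ofFn r') • ⊤ : Submodule R R)) x := by
      rw [RingTheory.Sequence.isWeaklyRegular_singleton_iff] at h2
      exact h2
    have hsmul_top : (Ideal.ofList (List.ofFn r') • ⊤ : Submodule R R) =
        Ideal.span (Set.range r') := by
      rw [smul_eq_mul, Ideal.mul_top, hofList]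
    rw [hsmul_top] at hreg
    have hx : ∀ b : R, x * b ∈ Ideal.span (Set.range r') → b ∈ Ideal.span (Set.range r') := by
      intro b hb
      have h0 : x • (Submodule.Quotient.mk b :
          R ⧸ (Ideal.span (Set.range r') : Submodule R R)) = 0 := by
        rw [← Submodule.Quotient.mk_smul, Submodule.Quotient.mk_eq_zero]
        simpa [smul_eq_mul] using hb
      have := hreg (h0.trans (smul_zero x).symm)
      rwa [Submodule.Quotient.mk_eq_zero] at this
    have hspan : Ideal.span (Set.range r) =
        Ideal.span (Set.range r') ⊔ Ideal.span {x} := by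
      rw [← Ideal.span_union]
      congr 1
      ext a
      constructor
      · rintro ⟨i, rfl⟩
        induction i using Fin.lastCases with
        | last => exact Or.inr rfl
        | cast j => exact Or.inl ⟨j, rfl⟩
      · rintro (⟨j, rfl⟩ | h)
        · exact ⟨j.castSucc, rfl⟩
        · rcases h with rfl
          exact ⟨Fin.last n, rfl⟩
    exact ⟨hspan ▸ K.step x hx⟩

end Koszul

section Assembly

variable {R : Type u} [CommRing R]

open RingTheory.Sequence MonoidalCategory
open scoped TensorProduct

variable {n : ℕ} {I : Ideal R}

/-- The chain complex underlying a `KoszulData`. -/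
noncomputable def KoszulData.complex (K : KoszulData R n I) : ChainComplex (ModuleCat.{u} R) ℕ :=
  ChainComplex.of K.M (fun p => ModuleCat.ofHom (K.d p))
    (fun p => ModuleCat.hom_ext (LinearMap.ext (K.dd p)))

lemma KoszulData.complex_d (K : KoszulData R n I) (p : ℕ) :
    K.complex.d (p + 1) p = ModuleCat.ofHom (K.d p) :=
  by unfold KoszulData.complex; exact ChainComplex.of_d K.M (fun p => ModuleCat.ofHom (K.d p)) p

/-- The augmentation map of a `KoszulData`. -/
noncomputable def KoszulData.aug (K : KoszulData R n I) :
    (K.M 0 : Type u) →ₗ[R] (R ⧸ I) :=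
  (I.mkQ).comp K.e0.toLinearMap

lemma KoszulData.aug_d (K : KoszulData R n I) (w : (K.M 1 : Type u)) :
    K.aug (K.d 0 w) = 0 := by
  have : K.e0 (K.d 0 w) ∈ I := (K.exact0 (K.d 0 w)).mp ⟨w, rfl⟩
  simpa [KoszulData.aug, Ideal.Quotient.eq_zero_iff_mem] using this

/-- The augmentation morphism to the single complex. -/
noncomputable def KoszulData.pi (K : KoszulData R n I) :
    K.complex ⟶ (ChainComplex.single₀ (ModuleCat.{u} R)).obj (ModuleCat.of R (R ⧸ I)) :=
  (ChainComplex.toSingle₀Equiv K.complex _).symm ⟨ModuleCat.ofHom K.aug, by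
    rw [K.complex_d 0]
    exact ModuleCat.hom_ext (LinearMap.ext K.aug_d)⟩

lemma KoszulData.pi_f_zero (K : KoszulData R n I) : K.pi.f 0 = ModuleCat.ofHom K.aug :=
  ChainComplex.toSingle₀Equiv_symm_apply_f_zero _ _

/-- A `KoszulData` yields a projective resolution of `R ⧸ I`. -/
noncomputable def KoszulData.resolution (K : KoszulData R n I) :
    ProjectiveResolution (ModuleCat.of R (R ⧸ I)) where
  complex := K.complex
  projective m := ModuleCat.projective_of_free
    ((Finsupp.basisSingleOne).map (K.equiv m).symm)
  π := K.pi
  quasiIso := ⟨fun m => by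
    cases m with
    | zero =>
      rw [ChainComplex.quasiIsoAt₀_iff, ShortComplex.quasiIso_iff_of_zeros']
      rotate_left
      · exact K.complex.shape 0 0 (by simp)
      · rfl
      · rfl
      constructor
      · rw [ShortComplex.moduleCat_exact_iff]
        intro z hz
        have hz0 : K.aug z = 0 := by
          exact hz
        have hz' : K.e0 z ∈ I := by
          exact Ideal.Quotient.eq_zero_iff_mem.mp hz0
        obtain ⟨w, hw⟩ := (K.exact0 z).mpr hz'
        refine ⟨w, ?_⟩
        show (K.complex.sc' 1 0 0).f w = z
        have h : (K.complex.sc' 1 0 0).f = K.complex.d 1 0 := rfl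
        rw [h, K.complex_d 0]
        exact hw
      · rw [ModuleCat.epi_iff_surjective]
        show Function.Surjective (K.pi.f 0)
        rw [K.pi_f_zero]
        exact (Submodule.mkQ_surjective I).comp K.e0.surjective
    | succ m =>
      rw [quasiIsoAt_iff_exactAt' K.pi (m + 1)
        (ChainComplex.exactAt_succ_single_obj _ m)]
      rw [HomologicalComplex.exactAt_iff' _ (m + 2) (m + 1) m (by simp) (by simp)]
      rw [ShortComplex.moduleCat_exact_iff]
      intro z hz
      have hz' : K.d m z = 0 := by
        have h : (K.complex.sc' (m + 2) (m + 1) m).g = K.complex.d (m + 1) m := rfl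
        rw [show (K.complex.sc' (m + 2) (m + 1) m).g z = K.complex.d (m + 1) m z from
          by rw [h]; rfl, K.complex_d m] at hz
        exact hz
      obtain ⟨w, hw⟩ := K.exact1 m z hz'
      refine ⟨w, ?_⟩
      show (K.complex.sc' (m + 2) (m + 1) m).f w = z
      have h : (K.complex.sc' (m + 2) (m + 1) m).f = K.complex.d (m + 2) (m + 1) := rfl
      rw [h, K.complex_d (m + 1)]
      exact hw⟩

end Assembly

/-!
STATEMENT 4: for a regular sequence `(r₁,…,rₙ)` generating `I ⊲ R`,
`Tor_*^R(R/I, R/I)` is isomorphic (as a graded `R/I`-algebra) to the exterior algebra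
over `R/I` on a free module of rank `n` concentrated in degree 1.  We state the
degreewise form: `Tor_p^R(R/I, R/I)` is isomorphic to the degree-`p` part
`R/I ⊗ Λ^p(U)` of the exterior algebra, a free `R/I`-module on the basis indexed by
`ExtIdx n p` (an `R`-linear isomorphism between modules annihilated by `I` is
automatically `R/I`-linear).
-/
theorem tor_of_quotient_regular_is_exterior_algebra
    (R : Type u) [CommRing R] (n : ℕ) (r : Fin n → R)
    (hreg : RingTheory.Sequence.IsRegular R (List.ofFn r))
    (I : Ideal R) (hI : I = Ideal.span (Set.range r)) (p : ℕ) :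
    Nonempty ((((Tor' (ModuleCat.{u} R) p).obj (ModuleCat.of R (R ⧸ I))).obj
        (ModuleCat.of R (R ⧸ I))) ≅ ModuleCat.of R (ExtIdx n p →₀ (R ⧸ I))) := by
  open scoped TensorProduct in
  subst hI
  set I := Ideal.span (Set.range r) with hI
  obtain ⟨K⟩ := koszulData_exists n r hreg.toIsWeaklyRegular
  let P := K.resolution
  let F := (MonoidalCategory.tensoringRight (ModuleCat.{u} R)).obj (ModuleCat.of R (R ⧸ I))
  -- the left derived functor computed by the Koszul resolution
  let iso2 := P.isoLeftDerivedObj F p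
  -- the mapped complex has zero differentials
  let D := (F.mapHomologicalComplex (ComplexShape.down ℕ)).obj P.complex
  have hPC : P.complex = K.complex := rfl
  have hmap : ∀ j : ℕ, F.map (K.complex.d (j + 1) j) = 0 := by
    intro j
    rw [K.complex_d j]
    apply ModuleCat.hom_ext
    apply TensorProduct.ext'
    intro m y
    rw [ModuleCat.hom_zero, LinearMap.zero_apply]
    show (K.d j m) ⊗ₜ[R] y = 0
    have key : ∀ u : (K.M j : Type u), u ∈ I • (⊤ : Submodule R (K.M j)) →
        (u ⊗ₜ[R] y : (K.M j : Type u) ⊗[R] (R ⧸ I)) = 0 := by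
      intro u hu
      refine Submodule.smul_induction_on hu ?_ ?_
      · intro a ha v _
        rw [TensorProduct.smul_tmul]
        have hy : a • y = 0 := by
          obtain ⟨b, rfl⟩ := Submodule.Quotient.mk_surjective I y
          rw [← Submodule.Quotient.mk_smul, Submodule.Quotient.mk_eq_zero]
          exact Ideal.mul_mem_right b I ha
        rw [hy, TensorProduct.tmul_zero]
      · intro u v hu hv
        rw [TensorProduct.add_tmul, hu, hv, add_zero]
    exact key _ (K.hdI j m)
  have hzero : ∀ i j, D.d i j = 0 := by
    intro i j
    by_cases h : j + 1 = i
    · subst h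
      exact hmap j
    · have h0 : K.complex.d i j = 0 := K.complex.shape i j h
      show F.map (K.complex.d i j) = 0
      rw [h0]
      exact F.map_zero _ _
  -- homology of a complex with zero differentials
  let hdata := CategoryTheory.ShortComplex.LeftHomologyData.ofZeros (D.sc p)
    (hzero _ _) (hzero _ _)
  let iso3 : D.homology p ≅ D.X p := hdata.homologyIso
  -- identify the degree-p module
  let e : ((K.M p : Type u) ⊗[R] (R ⧸ I)) ≃ₗ[R] (ExtIdx n p →₀ (R ⧸ I)) :=
    (TensorProduct.congr (K.equiv p) (LinearEquiv.refl R (R ⧸ I))) ≪≫ₗ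
      TensorProduct.finsuppScalarLeft R (R ⧸ I) (ExtIdx n p)
  let iso4 : D.X p ≅ ModuleCat.of R (ExtIdx n p →₀ (R ⧸ I)) := e.toModuleIso
  exact ⟨iso2 ≪≫ iso3 ≪≫ iso4⟩
end

section
/- Let (r_1,...,r_n) be a regular sequence in a commutative ring R generating the ideal I. Then I/I² is a free R/I-module with basis the residue classes {r_1},...,{r_n}. -/
open RingTheory.Sequence

lemma aux_ofFn_range {R : Type*} [CommRing R] {n : ℕ} (r : Fin n → R) :
    Ideal.ofList (List.ofFn r) = Ideal.span (Set.range r) := by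
  apply congrArg Ideal.span
  ext x
  exact List.mem_ofFn

lemma aux_smul_top {R : Type*} [CommRing R] (J : Ideal R) : (J • ⊤ : Submodule R R) = J := by
  rw [← Ideal.span_eq J, Submodule.span_smul_eq, Submodule.set_smul_top_eq_span]

lemma aux_regular_rel {R : Type*} [CommRing R] :
    ∀ (n : ℕ) (r : Fin n → R), IsWeaklyRegular R (List.ofFn r) →
      ∀ a : Fin n → R, (∑ i, a i * r i) = 0 → ∀ i, a i ∈ Ideal.span (Set.range r) := by
  intro n
  induction n with
  | zero => intro r _ a _ i; exact i.elim0
  | succ n IH =>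
    intro r hw a hsum
    set r' : Fin n → R := fun j => r j.castSucc with hr'
    have hlist : List.ofFn r = List.ofFn r' ++ [r (Fin.last n)] := by
      rw [List.ofFn_succ', List.concat_eq_append]
    have hlen' : (List.ofFn r' : List R).length = n := by simp
    -- weak regularity of the prefix
    have hw' : IsWeaklyRegular R (List.ofFn r') := by
      constructor
      intro i h
      have h2 : i < (List.ofFn r).length := by simpa using (by omega : i < n + 1)
      have := hw.regular_mod_prev i h2
      have htake : (List.ofFn r).take i = (List.ofFn r').take i := by
        rw [hlist]; exact List.take_append_of_le_length (by omega)
      simp only [List.getElem_ofFn] at this ⊢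
      rw [htake] at this
      exact this
    -- regularity of the last element mod the prefix ideal
    have hlastreg : IsSMulRegular
        (R ⧸ (Ideal.ofList (List.ofFn r') • ⊤ : Submodule R R)) (r (Fin.last n)) := by
      have h2 : n < (List.ofFn r).length := by simp
      have := hw.regular_mod_prev n h2
      have htake : (List.ofFn r).take n = List.ofFn r' := by
        rw [hlist, List.take_append_of_le_length (le_of_eq hlen'.symm)]
        exact List.take_of_length_le (le_of_eq hlen')
      simp only [List.getElem_ofFn] at this
      rw [htake] at this
      exact this
    set J : Ideal R := Ideal.span (Set.range r') with hJ
    have hJI : J ≤ Ideal.span (Set.range r) := by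
      apply Ideal.span_mono
      rintro x ⟨j, rfl⟩
      exact ⟨j.castSucc, rfl⟩
    have hsum' : (∑ j : Fin n, a j.castSucc * r' j) + a (Fin.last n) * r (Fin.last n) = 0 := by
      rw [← hsum, Fin.sum_univ_castSucc]
    -- show a (last) ∈ J
    have hmemJ : a (Fin.last n) ∈ J := by
      have hprod : a (Fin.last n) * r (Fin.last n) ∈ J := by
        have : a (Fin.last n) * r (Fin.last n) = -(∑ j : Fin n, a j.castSucc * r' j) :=
          eq_neg_of_add_eq_zero_right hsum'
        rw [this]
        refine neg_mem (Ideal.sum_mem _ fun j _ => Ideal.mul_mem_left _ _ ?_)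
        exact Ideal.subset_span ⟨j, rfl⟩
      have hq : r (Fin.last n) •
          (Submodule.Quotient.mk (p := (Ideal.ofList (List.ofFn r') • ⊤ : Submodule R R))
            (a (Fin.last n))) = 0 := by
        rw [← Submodule.Quotient.mk_smul, Submodule.Quotient.mk_eq_zero, aux_smul_top,
          aux_ofFn_range, smul_eq_mul, mul_comm]
        exact hprod
      have := hlastreg (hq.trans (smul_zero (r (Fin.last n))).symm)
      rwa [Submodule.Quotient.mk_eq_zero, aux_smul_top, aux_ofFn_range] at this
    -- write a (last) = ∑ d j * r' j
    obtain ⟨d, hd⟩ := Submodule.mem_span_range_iff_exists_fun R |>.mp hmemJ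
    have hnewsum : (∑ j : Fin n, (a j.castSucc + d j * r (Fin.last n)) * r' j) = 0 := by
      have : (∑ j : Fin n, (a j.castSucc + d j * r (Fin.last n)) * r' j)
          = (∑ j : Fin n, a j.castSucc * r' j)
            + (∑ j : Fin n, d j * r' j) * r (Fin.last n) := by
        rw [Finset.sum_mul, ← Finset.sum_add_distrib]
        congr 1; ext j; ring
      rw [this]
      have hd' : (∑ j : Fin n, d j * r' j) = a (Fin.last n) := by
        simpa [smul_eq_mul] using hd
      rw [hd', hsum']
    have hIH := IH r' hw' _ hnewsum
    intro i
    refine Fin.lastCases ?_ ?_ i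
    · exact hJI hmemJ
    · intro j
      have h1 : a j.castSucc + d j * r (Fin.last n) ∈ Ideal.span (Set.range r) := hJI (hIH j)
      have h2 : d j * r (Fin.last n) ∈ Ideal.span (Set.range r) :=
        Ideal.mul_mem_left _ _ (Ideal.subset_span ⟨Fin.last n, rfl⟩)
      simpa using sub_mem h1 h2


universe u

/-!
STATEMENT 5: for a regular sequence `(r₁,…,rₙ)` generating `I ⊲ R`, the `R/I`-module
`I/I²` (Mathlib's `I.Cotangent`) is free with basis the residue classes `{r₁},…,{rₙ}`.
-/
theorem cotangent_module_free_on_regular_sequence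
    (R : Type u) [CommRing R] (n : ℕ) (r : Fin n → R)
    (hreg : RingTheory.Sequence.IsRegular R (List.ofFn r))
    (I : Ideal R) (hI : I = Ideal.span (Set.range r)) :
    ∃ b : Module.Basis (Fin n) (R ⧸ I) I.Cotangent,
      ∀ j : Fin n, b j = I.toCotangent ⟨r j, by rw [hI]; exact Ideal.subset_span ⟨j, rfl⟩⟩ := by
  have hw : RingTheory.Sequence.IsWeaklyRegular R (List.ofFn r) := hreg.toIsWeaklyRegular
  set u : Fin n → I := fun j => ⟨r j, by rw [hI]; exact Ideal.subset_span ⟨j, rfl⟩⟩ with hu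
  set v : Fin n → I.Cotangent := fun j => I.toCotangent (u j) with hv
  have hsmul : ∀ (a : R) (x : I),
      (Ideal.Quotient.mk I a) • I.toCotangent x = I.toCotangent (a • x) := fun a x => rfl
  -- linear independence
  have hli : LinearIndependent (R ⧸ I) v := by
    rw [Fintype.linearIndependent_iff]
    intro g hg
    choose a ha using fun i => Ideal.Quotient.mk_surjective (I := I) (g i)
    have hsum0 : I.toCotangent (∑ i, a i • u i) = 0 := by
      calc I.toCotangent (∑ i, a i • u i) = ∑ i, I.toCotangent (a i • u i) := map_sum _ _ _
        _ = ∑ i, g i • v i := Finset.sum_congr rfl fun i _ => by rw [← ha i, hsmul]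
        _ = 0 := hg
    have hmem : ((∑ i, a i • u i : I) : R) ∈ I ^ 2 := (I.toCotangent_eq_zero _).mp hsum0
    have hcoe : ((∑ i, a i • u i : I) : R) = ∑ i, a i * r i := by
      push_cast
      simp [hu, smul_eq_mul]
    have hmem2 : (∑ i, a i * r i) ∈ I • Submodule.span R (Set.range r) := by
      have h2 : I ^ 2 = I • Submodule.span R (Set.range r) := by
        rw [pow_two, Ideal.smul_eq_mul]
        congr 1
      rw [← h2, ← hcoe]; exact hmem
    obtain ⟨c, hcI, hcsum⟩ := (Submodule.mem_ideal_smul_span_iff_exists_sum I r _).mp hmem2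
    have hcsum' : (∑ i, c i * r i) = ∑ i, a i * r i := by
      rw [← hcsum, Finsupp.sum_fintype]
      · rfl
      · intro i; exact zero_smul R (r i)
    have hrel : (∑ i, (a i - c i) * r i) = 0 := by
      simp only [sub_mul, Finset.sum_sub_distrib, hcsum']
      ring
    have hkey := aux_regular_rel n r hw _ hrel
    intro i
    have : a i ∈ I := by
      have h1 : a i - c i ∈ I := hI ▸ hkey i
      have h2 : c i ∈ I := hcI i
      simpa using add_mem h1 h2
    rw [← ha i, Ideal.Quotient.eq_zero_iff_mem]
    exact this
  -- spanning
  have hsp : ⊤ ≤ Submodule.span (R ⧸ I) (Set.range v) := by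
    rintro x -
    obtain ⟨y, rfl⟩ := I.toCotangent_surjective x
    have hy : (y : R) ∈ Ideal.span (Set.range r) := hI ▸ y.2
    obtain ⟨c, hc⟩ := (Submodule.mem_span_range_iff_exists_fun R).mp hy
    have hyeq : y = ∑ i, c i • u i := by
      apply Subtype.ext
      push_cast
      simpa [hu, smul_eq_mul] using hc.symm
    rw [hyeq, map_sum]
    refine Submodule.sum_mem _ fun i _ => ?_
    rw [← hsmul]
    exact Submodule.smul_mem _ _ (Submodule.subset_span ⟨i, rfl⟩)
  refine ⟨Module.Basis.mk hli hsp, fun j => ?_⟩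
  rw [Module.Basis.mk_apply]
end

section
/- Let (r_1,...,r_n) be a regular sequence in a commutative ring R generating the ideal I. Then the associated graded algebra gr_I^*(R) = ⊕_{s≥0} I^s/I^{s+1} is isomorphic as a graded R/I-algebra to the symmetric algebra Sym_{R/I}^*(I/I²). -/
universe u

/-!
STATEMENT 6: for a regular sequence `(r₁,…,rₙ)` generating `I ⊲ R`, the associated graded
algebra `gr_I^*(R) = ⊕ I^s/I^{s+1}` is isomorphic, as a graded `R/I`-algebra, to the
symmetric algebra `Sym_{R/I}^*(I/I²)`.  Since `I/I²` is free on the classes of the `rⱼ`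
(cf. STATEMENT 5), `Sym_{R/I}^*(I/I²)` is the polynomial ring `(R/I)[X₁,…,Xₙ]`, and the
isomorphism is induced by the degreewise surjection `Xⱼ ↦ rⱼ + I^{s+1}`.  We state that
this graded map is bijective: surjectivity is the second clause, and injectivity is the
first clause (a homogeneous polynomial of degree `s` whose value at `r` lies in `I^{s+1}`
has all coefficients in `I`, i.e. vanishes over `R/I`) — this is the classical
"quasi-regularity" formulation of `gr_I^*(R) ≅ Sym_{R/I}^*(I/I²)`.
-/
open MvPolynomial

namespace AGISA
variable {R : Type u} [CommRing R]

lemma prod_pow_mem {k : ℕ} {p : Fin k → R} {B : Ideal R} (hp : ∀ i, p i ∈ B)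
    (d : Fin k →₀ ℕ) (s : Finset (Fin k)) :
    (∏ i ∈ s, p i ^ d i) ∈ B ^ (∑ i ∈ s, d i) := by
  classical
  induction s using Finset.induction_on with
  | empty => simp [Ideal.one_eq_top]
  | insert a s hnot ih =>
    rw [Finset.prod_insert hnot, Finset.sum_insert hnot, pow_add]
    exact Ideal.mul_mem_mul (Ideal.pow_mem_pow (hp a) _) ih

lemma eval_mem_mul_pow {k : ℕ} {p : Fin k → R} {B : Ideal R} (hp : ∀ i, p i ∈ B)
    {F : MvPolynomial (Fin k) R} {t : ℕ} (hF : F.IsHomogeneous t)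
    {A : Ideal R} (hc : ∀ m, F.coeff m ∈ A) :
    MvPolynomial.eval p F ∈ A * B ^ t := by
  rw [eval_eq]
  refine Ideal.sum_mem _ fun d hd => ?_
  have hdeg : (∑ i ∈ d.support, d i) = t := by
    have := hF.coeff_eq_zero (d := d)
    by_contra h
    exact (mem_support_iff.mp hd) (this h)
  rw [← hdeg]
  exact Ideal.mul_mem_mul (hc d) (prod_pow_mem hp d d.support)

lemma eval_mem_pow {k : ℕ} {p : Fin k → R} {B : Ideal R} (hp : ∀ i, p i ∈ B)
    {F : MvPolynomial (Fin k) R} {t : ℕ} (hF : F.IsHomogeneous t) :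
    MvPolynomial.eval p F ∈ B ^ t := by
  have := eval_mem_mul_pow hp hF (A := ⊤) (fun m => Submodule.mem_top)
  rwa [Ideal.top_mul] at this

lemma exists_homog_eval {k : ℕ} (p : Fin k → R) (s : ℕ) {x : R}
    (hx : x ∈ (Ideal.span (Set.range p)) ^ s) :
    ∃ F : MvPolynomial (Fin k) R, F.IsHomogeneous s ∧ MvPolynomial.eval p F = x := by
  induction s generalizing x with
  | zero => exact ⟨C x, isHomogeneous_C _ _, eval_C _⟩
  | succ s ih =>
    rw [pow_succ] at hx
    refine Submodule.mul_induction_on hx ?_ ?_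
    · intro a ha b hb
      obtain ⟨F, hF, hFa⟩ := ih ha
      obtain ⟨c, hc⟩ := Ideal.mem_span_range_iff_exists_fun.mp hb
      refine ⟨F * ∑ i, C (c i) * X i, ?_, ?_⟩
      · exact hF.mul (IsHomogeneous.sum _ _ _ fun i _ => isHomogeneous_C_mul_X _ _)
      · rw [eval_mul, hFa]
        simp [hc]
    · rintro x y ⟨F, hF, hFx⟩ ⟨G, hG, hGy⟩
      exact ⟨F + G, hF.add hG, by rw [map_add, hFx, hGy]⟩

/-- The quasi-regularity property for a generating family. -/
def QuasiReg {k : ℕ} (p : Fin k → R) : Prop :=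
  ∀ (s : ℕ) (F : MvPolynomial (Fin k) R), F.IsHomogeneous s →
    MvPolynomial.eval p F ∈ (Ideal.span (Set.range p)) ^ (s + 1) →
    ∀ m, MvPolynomial.coeff m F ∈ Ideal.span (Set.range p)

lemma key {n : ℕ} (f : Fin (n + 1) → R)
    (HQ : QuasiReg (f ∘ Fin.succ))
    (Hg : ∀ x : R, f 0 * x ∈ Ideal.span (Set.range (f ∘ Fin.succ)) →
      x ∈ Ideal.span (Set.range (f ∘ Fin.succ))) :
    QuasiReg f := by
  set g : R := f 0 with hg
  set f' : Fin n → R := f ∘ Fin.succ with hf'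
  set J : Ideal R := Ideal.span (Set.range f') with hJ
  set I : Ideal R := Ideal.span (Set.range f) with hI
  have hpJ : ∀ i, f' i ∈ J := fun i => Ideal.subset_span ⟨i, rfl⟩
  have hJI : J ≤ I := Ideal.span_mono (Set.range_comp_subset_range _ _)
  have hgI : g ∈ I := Ideal.subset_span ⟨0, rfl⟩
  -- Lemma E
  have E : ∀ (t : ℕ) (x : R), x ∈ J ^ t → g * x ∈ J ^ (t + 1) → x ∈ J ^ (t + 1) := by
    intro t x hx hgx
    obtain ⟨K, hK, rfl⟩ := exists_homog_eval f' t hx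
    have h1 : MvPolynomial.eval f' (C g * K) ∈ J ^ (t + 1) := by
      rwa [eval_mul, eval_C]
    have h2 : (C g * K).IsHomogeneous t := by
      have := (isHomogeneous_C (Fin n) g).mul hK
      rwa [zero_add] at this
    have h3 := HQ t (C g * K) h2 h1
    have h4 : ∀ m, MvPolynomial.coeff m K ∈ J := by
      intro m
      apply Hg
      have := h3 m
      rwa [coeff_C_mul] at this
    have := eval_mem_mul_pow hpJ hK (A := J) h4
    rwa [← pow_succ'] at this
  -- Lemma E'
  have E' : ∀ (c : ℕ) (y : R), g * y ∈ J ^ c → y ∈ J ^ c := by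
    intro c
    induction c with
    | zero => intro y _; simp [Ideal.one_eq_top]
    | succ c ih =>
      intro y hy
      exact E c y (ih y (Ideal.pow_le_pow_right (Nat.le_succ c) hy)) hy
  -- Lemma D
  have D : ∀ (M c : ℕ) (b : ℕ → R), (∀ e, b e ∈ J ^ (c - e)) →
      (∑ e ∈ Finset.range (M + 1), g ^ e * b e) = 0 →
      ∀ e, e ≤ c → e ≤ M →
        ∃ u v, u ∈ J ^ (c - e + 1) ∧ v ∈ J ^ (c - e) ∧ b e = u + g * v := by
    intro M
    induction M with
    | zero =>
      intro c b hb hsum e hec heM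
      interval_cases e
      refine ⟨0, 0, Ideal.zero_mem _, Ideal.zero_mem _, ?_⟩
      simpa using hsum
    | succ M ih =>
      intro c b hb hsum e hec heM
      set y : R := ∑ k ∈ Finset.range (M + 1), g ^ k * b (k + 1) with hy
      have hgyeq : (∑ k ∈ Finset.range (M + 1), g ^ (k + 1) * b (k + 1)) = g * y := by
        rw [hy, Finset.mul_sum]
        exact Finset.sum_congr rfl fun k _ => by ring
      rw [Finset.sum_range_succ', hgyeq, pow_zero, one_mul] at hsum
      have hsum' : b 0 + g * y = 0 := (add_comm (b 0) (g * y)).trans hsum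
      have hgy : g * y ∈ J ^ c := by
        rw [eq_neg_of_add_eq_zero_right hsum']
        simpa using hb 0
      have hyc : y ∈ J ^ c := E' c y hgy
      match e with
      | 0 =>
        refine ⟨0, -y, Ideal.zero_mem _, by simpa using hyc, ?_⟩
        rw [eq_neg_of_add_eq_zero_left hsum']; ring
      | e + 1 =>
        -- shifted system
        set b' : ℕ → R := fun k => b (k + 1) - (if k = 0 then y else 0) with hb'
        have hb'mem : ∀ k, b' k ∈ J ^ (c - 1 - k) := by
          intro k
          rw [hb']
          refine Submodule.sub_mem _ ?_ ?_
          · have := hb (k + 1)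
            have heq : c - (k + 1) = c - 1 - k := by omega
            rwa [heq] at this
          · by_cases hk : k = 0
            · simp only [hk, if_pos rfl]
              exact Ideal.pow_le_pow_right (by omega) hyc
            · simp [hk]
        have hsum'' : (∑ k ∈ Finset.range (M + 1), g ^ k * b' k) = 0 := by
          rw [hb']
          have : ∀ k, g ^ k * (b (k + 1) - (if k = 0 then y else 0)) =
              g ^ k * b (k + 1) - (if k = 0 then y else 0) * g ^ k := by
            intro k; by_cases hk : k = 0 <;> simp [hk]
          simp_rw [this]
          rw [Finset.sum_sub_distrib, ← hy]
          simp_rw [ite_mul, zero_mul]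
          rw [Finset.sum_ite_eq' (Finset.range (M + 1)) 0 (fun k => y * g ^ k)]
          simp
        obtain ⟨u, v, hu, hv, hbe⟩ := ih (c - 1) b' hb'mem hsum'' e (by omega) (by omega)
        by_cases he : e = 0
        · subst he
          refine ⟨u + y, v, ?_, ?_, ?_⟩
          · refine Submodule.add_mem _ ?_ ?_
            · have heq : c - 1 - 0 + 1 = c - (0 + 1) + 1 := by omega
              rwa [heq] at hu
            · exact Ideal.pow_le_pow_right (by omega) hyc
          · have heq : c - 1 - 0 = c - (0 + 1) := by omega
            rwa [heq] at hv
          · have : b (0 + 1) = b' 0 + y := by rw [hb']; simp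
            rw [this, hbe]; ring
        · refine ⟨u, v, ?_, ?_, ?_⟩
          · have heq : c - 1 - e + 1 = c - (e + 1) + 1 := by omega
            rwa [heq] at hu
          · have heq : c - 1 - e = c - (e + 1) := by omega
            rwa [heq] at hv
          · have : b (e + 1) = b' e := by rw [hb']; simp [he]
            rw [this, hbe]
  -- main argument
  intro d F hF hFI
  obtain ⟨G, hG, hGe⟩ := exists_homog_eval f (d + 1) hFI
  set P := finSuccEquiv R n F with hP
  set Q := finSuccEquiv R n G with hQ
  have hfc : (Fin.cons (f 0) (f ∘ Fin.succ) : Fin (n + 1) → R) = f := by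
    funext i
    cases i using Fin.cases with
    | zero => simp
    | succ i => simp
  have EV : ∀ (H : MvPolynomial (Fin (n + 1)) R) (N : ℕ),
      (finSuccEquiv R n H).natDegree < N →
      MvPolynomial.eval f H =
        ∑ e ∈ Finset.range N, g ^ e * MvPolynomial.eval f' ((finSuccEquiv R n H).coeff e) := by
    intro H N hN
    rw [← hfc, eval_eq_eval_mv_eval']
    rw [Polynomial.eval_eq_sum_range' (lt_of_le_of_lt Polynomial.natDegree_map_le hN)]
    refine Finset.sum_congr rfl fun e _ => ?_
    rw [Polynomial.coeff_map]
    ring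
  set N : ℕ := P.natDegree + Q.natDegree + d + 2 with hNdef
  have h1 := EV F N (by rw [← hP]; omega)
  have h2 := EV G N (by rw [← hQ]; omega)
  have hb : ∀ e, (MvPolynomial.eval f' (P.coeff e) - MvPolynomial.eval f' (Q.coeff e))
      ∈ J ^ (d - e) := by
    intro e
    refine Submodule.sub_mem _ ?_ ?_
    · by_cases he : e ≤ d
      · exact eval_mem_pow hpJ (hF.finSuccEquiv_coeff_isHomogeneous e (d - e) (by omega))
      · rw [Nat.sub_eq_zero_of_le (by omega), pow_zero, Ideal.one_eq_top]
        exact Submodule.mem_top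
    · by_cases he : e ≤ d
      · refine Ideal.pow_le_pow_right (by omega)
          (eval_mem_pow hpJ (hG.finSuccEquiv_coeff_isHomogeneous e (d + 1 - e) (by omega)))
      · rw [Nat.sub_eq_zero_of_le (by omega), pow_zero, Ideal.one_eq_top]
        exact Submodule.mem_top
  have hsum0 : (∑ e ∈ Finset.range N,
      g ^ e * (MvPolynomial.eval f' (P.coeff e) - MvPolynomial.eval f' (Q.coeff e))) = 0 := by
    simp_rw [mul_sub]
    rw [Finset.sum_sub_distrib, ← h1, ← h2, hGe]
    ring
  have hNeq : N - 1 + 1 = N := by omega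
  have hD := D (N - 1) d _ hb (by rw [hNeq]; exact hsum0)
  have HC : ∀ e, e ≤ d → ∀ m, MvPolynomial.coeff m (P.coeff e) ∈ I := by
    intro e he m
    obtain ⟨u, v, hu, hv, hbe⟩ := hD e he (by omega)
    obtain ⟨Hv, hHv, hHve⟩ := exists_homog_eval f' (d - e) hv
    have hKhom : (P.coeff e - C g * Hv).IsHomogeneous (d - e) := by
      refine (hF.finSuccEquiv_coeff_isHomogeneous e (d - e) (by omega)).sub ?_
      have := (isHomogeneous_C (Fin n) g).mul hHv
      rwa [zero_add] at this
    have hKe : MvPolynomial.eval f' (P.coeff e - C g * Hv) ∈ J ^ (d - e + 1) := by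
      rw [map_sub, eval_mul, eval_C, hHve]
      have heq2 : MvPolynomial.eval f' (P.coeff e) - g * v =
          u + MvPolynomial.eval f' (Q.coeff e) := by linear_combination hbe
      rw [heq2]
      refine Submodule.add_mem _ hu ?_
      have h3 := eval_mem_pow hpJ (hG.finSuccEquiv_coeff_isHomogeneous e (d + 1 - e) (by omega))
      have heq : d + 1 - e = d - e + 1 := by omega
      rwa [heq] at h3
    have hKc := HQ (d - e) _ hKhom hKe
    have h4 := hKc m
    rw [coeff_sub, coeff_C_mul] at h4
    have h5 : MvPolynomial.coeff m (P.coeff e) =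
        (MvPolynomial.coeff m (P.coeff e) - g * MvPolynomial.coeff m Hv) +
          g * MvPolynomial.coeff m Hv := by ring
    rw [h5]
    exact Submodule.add_mem _ (hJI h4) (Ideal.mul_mem_right _ _ hgI)
  intro μ
  by_cases hμ : μ 0 ≤ d
  · have := HC (μ 0) hμ (Finsupp.tail μ)
    rwa [finSuccEquiv_coeff_coeff, Finsupp.cons_tail] at this
  · have hz : MvPolynomial.coeff μ F = 0 := by
      refine hF.coeff_eq_zero ?_
      have := Finsupp.le_degree 0 μ
      omega
    rw [hz]
    exact Ideal.zero_mem _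

lemma ofList_ofFn_eq {k : ℕ} (p : Fin k → R) :
    Ideal.ofList (List.ofFn p) = Ideal.span (Set.range p) := by
  have h : {r | r ∈ List.ofFn p} = Set.range p := by
    ext x
    exact List.mem_ofFn
  rw [Ideal.ofList, h]

lemma quasiReg_comp_perm {k : ℕ} {p : Fin k → R} (H : QuasiReg p) (σ : Equiv.Perm (Fin k)) :
    QuasiReg (p ∘ σ) := by
  have hr : Set.range (p ∘ σ) = Set.range p := by
    rw [Set.range_comp, Equiv.range_eq_univ, Set.image_univ]
  intro s G hG hGe m
  rw [hr] at hGe ⊢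
  have he : MvPolynomial.eval p (rename (⇑σ) G) = MvPolynomial.eval (p ∘ σ) G :=
    eval_rename _ _ _
  have h1 := H s (rename (⇑σ) G) hG.rename_isHomogeneous (by rw [he]; exact hGe)
  have h2 := h1 (m.mapDomain σ)
  rwa [coeff_rename_mapDomain _ σ.injective] at h2

theorem quasiReg_of_isWeaklyRegular :
    ∀ {k : ℕ} (p : Fin k → R),
      RingTheory.Sequence.IsWeaklyRegular R (List.ofFn p) → QuasiReg p := by
  intro k
  induction k with
  | zero =>
    intro p _ s G hG hGe m
    obtain ⟨c, rfl⟩ := C_surjective (Fin 0) G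
    have hr : Set.range p = ∅ := Set.range_eq_empty p
    rw [hr, Ideal.span_empty] at hGe ⊢
    rw [eval_C] at hGe
    have hc : c = 0 := by
      have hb : (⊥ : Ideal R) ^ (s + 1) = ⊥ := by
        rw [← Ideal.zero_eq_bot, zero_pow (Nat.succ_ne_zero s)]
      rw [hb] at hGe
      simpa using hGe
    subst hc
    simp
  | succ n ih =>
    intro p hp
    have hofn : List.ofFn p = List.ofFn (p ∘ Fin.castSucc) ++ [p (Fin.last n)] := by
      rw [List.ofFn_succ', List.concat_eq_append]
      rfl
    rw [hofn, RingTheory.Sequence.isWeaklyRegular_append_iff] at hp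
    obtain ⟨hp1, hp2⟩ := hp
    set h : Fin (n + 1) → R := p ∘ Fin.rev with hh
    have hhsucc : h ∘ Fin.succ = (p ∘ Fin.castSucc) ∘ (Fin.revPerm : Equiv.Perm (Fin n)) := by
      funext i
      show p (Fin.rev i.succ) = p (Fin.castSucc (Fin.rev i))
      rw [Fin.rev_succ]
    have hQ' : QuasiReg (h ∘ Fin.succ) := by
      rw [hhsucc]
      exact quasiReg_comp_perm (ih _ hp1) Fin.revPerm
    have hrange : Set.range (h ∘ Fin.succ) = Set.range (p ∘ Fin.castSucc) := by
      rw [hhsucc, Set.range_comp, Equiv.range_eq_univ, Set.image_univ]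
    have hJ' : Ideal.span (Set.range (h ∘ Fin.succ)) =
        Ideal.ofList (List.ofFn (p ∘ Fin.castSucc)) := by
      rw [hrange, ofList_ofFn_eq]
    have Hg : ∀ x : R, h 0 * x ∈ Ideal.span (Set.range (h ∘ Fin.succ)) →
        x ∈ Ideal.span (Set.range (h ∘ Fin.succ)) := by
      rw [RingTheory.Sequence.isWeaklyRegular_singleton_iff] at hp2
      intro x hx
      rw [hJ'] at hx ⊢
      set J := Ideal.ofList (List.ofFn (p ∘ Fin.castSucc)) with hJdef
      have hN : (J • (⊤ : Submodule R R)) = J := by rw [Ideal.smul_eq_mul, Ideal.mul_top]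
      have h0 : h 0 = p (Fin.last n) := by
        show p (Fin.rev 0) = _
        rw [Fin.rev_zero]
      rw [h0] at hx
      have h1 : (Submodule.Quotient.mk (p (Fin.last n) * x) :
          R ⧸ (J • (⊤ : Submodule R R))) = 0 := by
        rw [Submodule.Quotient.mk_eq_zero, hN]; exact hx
      have h2 : p (Fin.last n) • (Submodule.Quotient.mk x : R ⧸ (J • (⊤ : Submodule R R))) =
          p (Fin.last n) • (0 : R ⧸ (J • (⊤ : Submodule R R))) := by
        rw [smul_zero, ← h1, ← Submodule.Quotient.mk_smul]
        rfl
      have h3 := hp2 h2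
      rwa [Submodule.Quotient.mk_eq_zero, hN] at h3
    have hK := key h hQ' Hg
    have hfinal := quasiReg_comp_perm hK Fin.revPerm
    have heq : (h ∘ (Fin.revPerm : Equiv.Perm (Fin (n + 1)))) = p := by
      funext i
      show p (Fin.rev (Fin.rev i)) = p i
      rw [Fin.rev_rev]
    rwa [heq] at hfinal

end AGISA


theorem associated_graded_iso_symmetric_algebra
    (R : Type u) [CommRing R] (n : ℕ) (r : Fin n → R)
    (hreg : RingTheory.Sequence.IsRegular R (List.ofFn r))
    (I : Ideal R) (hI : I = Ideal.span (Set.range r)) :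
    -- injectivity (quasi-regularity)
    (∀ (s : ℕ) (F : MvPolynomial (Fin n) R), F.IsHomogeneous s →
      MvPolynomial.eval r F ∈ I ^ (s + 1) → ∀ m, MvPolynomial.coeff m F ∈ I) ∧
    -- surjectivity: every element of `I^s` is the value of a homogeneous degree-`s` form
    (∀ (s : ℕ) (x : R), x ∈ I ^ s →
      ∃ F : MvPolynomial (Fin n) R, F.IsHomogeneous s ∧ MvPolynomial.eval r F = x) := by
  subst hI
  constructor
  · exact AGISA.quasiReg_of_isWeaklyRegular r hreg.toIsWeaklyRegular
  · intro s x hx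
    exact AGISA.exists_homog_eval r s hx
end
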